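/- arXiv:1603.06683 — 5 statements merged into one kernel-verified Lean document; each statement's English description precedes it below -/
import Mathlib

section
/- For H_m the set of matrices in SL(2,ℤ) whose (2,1) entry is divisible by m: for a prime p, the index [SL(2,ℤ) : H_p] = p+1, and more generally [SL(2,ℤ) : H_{p^j}] = (p+1)·p^{j-1} for j ≥ 1. -/
open CongruenceSubgroup

namespace Stmt4Aux

open Matrix MulAction

variable (n : ℕ)

/-- Primitive vectors mod `n` (one of the two coordinates is a unit). -/
abbrev Prim := {v : ZMod n × ZMod n // IsUnit v.1 ∨ IsUnit v.2}

instance : SMul (ZMod n)ˣ (Prim n) :=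
  ⟨fun u v => ⟨((u : ZMod n) * v.1.1, (u : ZMod n) * v.1.2),
    v.2.imp (fun h => u.isUnit.mul h) (fun h => u.isUnit.mul h)⟩⟩

@[simp] lemma smul_coe (u : (ZMod n)ˣ) (v : Prim n) :
    (u • v).1 = ((u : ZMod n) * v.1.1, (u : ZMod n) * v.1.2) := rfl

instance : MulAction (ZMod n)ˣ (Prim n) where
  one_smul v := Subtype.ext (by simp)
  mul_smul u w v := Subtype.ext (by simp [mul_assoc])

lemma stab_triv (v : Prim n) : stabilizer (ZMod n)ˣ v = ⊥ := by
  ext u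
  simp only [mem_stabilizer_iff, Subgroup.mem_bot]
  constructor
  · intro h
    have h2 := congrArg Subtype.val h
    rcases v.2 with hx | hx
    · rcases hx with ⟨w, hw⟩
      have h3 : (u : ZMod n) * ↑w = 1 * ↑w := by
        have := congrArg Prod.fst h2
        simpa [← hw] using this
      exact Units.ext ((Units.mul_left_inj w).mp h3)
    · rcases hx with ⟨w, hw⟩
      have h3 : (u : ZMod n) * ↑w = 1 * ↑w := by
        have := congrArg Prod.snd h2
        simpa [← hw] using this
      exact Units.ext ((Units.mul_left_inj w).mp h3)
  · rintro rfl; exact one_smul _ _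

/-- Primitive vectors mod `n` up to unit scaling. -/
abbrev X := orbitRel.Quotient (ZMod n)ˣ (Prim n)

lemma card_prim_mul [NeZero n] :
    Nat.card (Prim n) = Nat.card (X n) * Nat.card (ZMod n)ˣ := by
  classical
  have hcard : ∀ ω : X n,
      Nat.card ((ZMod n)ˣ ⧸ stabilizer (ZMod n)ˣ ω.out) = Nat.card (ZMod n)ˣ := by
    intro ω
    rw [← Subgroup.index_eq_card, stab_triv, Subgroup.index_bot]
  letI : Fintype (Prim n) := Fintype.ofFinite _
  letI : Fintype (X n) := Fintype.ofFinite _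
  letI : ∀ ω : X n, Fintype ((ZMod n)ˣ ⧸ stabilizer (ZMod n)ˣ ω.out) :=
    fun ω => Fintype.ofFinite _
  have e := selfEquivSigmaOrbitsQuotientStabilizer (ZMod n)ˣ (Prim n)
  rw [Nat.card_congr e, Nat.card_eq_fintype_card, Fintype.card_sigma]
  have hs : ∀ ω ∈ Finset.univ (α := X n),
      Fintype.card ((ZMod n)ˣ ⧸ stabilizer (ZMod n)ˣ ω.out) = Nat.card (ZMod n)ˣ :=
    fun ω _ => by rw [← Nat.card_eq_fintype_card]; exact hcard ω
  rw [Finset.sum_congr rfl hs, Finset.sum_const, smul_eq_mul, Finset.card_univ]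
  simp [Nat.card_eq_fintype_card]

lemma card_prim_add [NeZero n] :
    Nat.card (Prim n) + (Nat.card {x : ZMod n // ¬ IsUnit x}) ^ 2 = n ^ 2 := by
  classical
  have e : {v : ZMod n × ZMod n // ¬ (IsUnit v.1 ∨ IsUnit v.2)} ≃
      {x : ZMod n // ¬ IsUnit x} × {x : ZMod n // ¬ IsUnit x} :=
    (Equiv.subtypeEquivRight (fun v => by tauto)).trans Equiv.subtypeProdEquivProd
  have h1 : Nat.card {v : ZMod n × ZMod n // ¬ (IsUnit v.1 ∨ IsUnit v.2)}
      = (Nat.card {x : ZMod n // ¬ IsUnit x}) ^ 2 := by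
    rw [Nat.card_congr e, Nat.card_prod, sq]
  have h2 : Nat.card (Prim n) + Nat.card {v : ZMod n × ZMod n // ¬ (IsUnit v.1 ∨ IsUnit v.2)}
      = Nat.card (ZMod n × ZMod n) := by
    rw [← Nat.card_sum]
    exact Nat.card_congr (Equiv.sumCompl _)
  have h3 : Nat.card (ZMod n × ZMod n) = n ^ 2 := by
    rw [Nat.card_prod, Nat.card_eq_fintype_card, ZMod.card, sq]
  omega

lemma card_units_add [NeZero n] :
    Nat.totient n + Nat.card {x : ZMod n // ¬ IsUnit x} = n := by
  classical
  have h1 : Nat.card {x : ZMod n // IsUnit x} = Nat.totient n := by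
    rw [← ZMod.card_units_eq_totient n, ← Nat.card_eq_fintype_card]
    exact Nat.card_congr
      ⟨fun x => x.2.unit, fun u => ⟨u, u.isUnit⟩,
        fun x => Subtype.ext x.2.unit_spec, fun u => Units.ext u.isUnit.unit_spec⟩
  have h2 : Nat.card {x : ZMod n // IsUnit x} + Nat.card {x : ZMod n // ¬ IsUnit x}
      = Nat.card (ZMod n) := by
    rw [← Nat.card_sum]
    exact Nat.card_congr (Equiv.sumCompl _)
  have h3 : Nat.card (ZMod n) = n := Nat.card_zmod n
  omega

lemma isUnit_iff {p : ℕ} (hp : p.Prime) {j : ℕ} (hj : 1 ≤ j) (x : ZMod (p ^ j)) :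
    IsUnit x ↔ (ZMod.castHom (dvd_pow_self p (Nat.one_le_iff_ne_zero.mp hj)) (ZMod p)) x ≠ 0 := by
  haveI : NeZero (p ^ j) := ⟨pow_ne_zero _ hp.ne_zero⟩
  have hx : ((x.val : ℕ) : ZMod (p ^ j)) = x := by rw [ZMod.natCast_val, ZMod.cast_id]
  have h2 : (ZMod.castHom (dvd_pow_self p (Nat.one_le_iff_ne_zero.mp hj)) (ZMod p)) x
      = ((x.val : ℕ) : ZMod p) := by rw [ZMod.castHom_apply, ZMod.natCast_val]
  rw [h2, Ne, ZMod.natCast_eq_zero_iff]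
  conv_lhs => rw [← hx]
  rw [ZMod.isUnit_iff_coprime, Nat.coprime_pow_right_iff (by omega)]
  rw [Nat.coprime_comm]
  exact hp.coprime_iff_not_dvd

lemma col_prim {p : ℕ} (hp : p.Prime) {j : ℕ} (hj : 1 ≤ j)
    (g : Matrix.SpecialLinearGroup (Fin 2) ℤ) :
    IsUnit ((g.1 0 0 : ℤ) : ZMod (p ^ j)) ∨ IsUnit ((g.1 1 0 : ℤ) : ZMod (p ^ j)) := by
  haveI : Fact p.Prime := ⟨hp⟩
  by_contra hcon
  push_neg at hcon
  obtain ⟨h1, h2⟩ := hcon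
  rw [isUnit_iff hp hj, not_ne_iff] at h1 h2
  have hdet : g.1 0 0 * g.1 1 1 - g.1 0 1 * g.1 1 0 = 1 := by
    have := g.2; rwa [Matrix.det_fin_two] at this
  have := congrArg (fun z : ℤ => (z : ZMod p)) hdet
  simp only [Int.cast_sub, Int.cast_mul, Int.cast_one] at this
  rw [show ((g.1 0 0 : ℤ) : ZMod p)
      = (ZMod.castHom (dvd_pow_self p (Nat.one_le_iff_ne_zero.mp hj)) (ZMod p))
        ((g.1 0 0 : ℤ) : ZMod (p ^ j)) from (map_intCast _ _).symm] at this
  rw [show ((g.1 1 0 : ℤ) : ZMod p)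
      = (ZMod.castHom (dvd_pow_self p (Nat.one_le_iff_ne_zero.mp hj)) (ZMod p))
        ((g.1 1 0 : ℤ) : ZMod (p ^ j)) from (map_intCast _ _).symm] at this
  rw [h1, h2] at this
  simp at this

theorem card_coset {p : ℕ} (hp : p.Prime) {j : ℕ} (hj : 1 ≤ j) :
    (Gamma0 (p ^ j)).index = Nat.card (X (p ^ j)) := by
  haveI : NeZero (p ^ j) := ⟨pow_ne_zero _ hp.ne_zero⟩
  set n := p ^ j with hn
  let f : Matrix.SpecialLinearGroup (Fin 2) ℤ → X n := fun g =>
    Quotient.mk'' ⟨(((g.1 0 0 : ℤ) : ZMod n), ((g.1 1 0 : ℤ) : ZMod n)), col_prim hp hj g⟩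
  have hwd : ∀ a b : Matrix.SpecialLinearGroup (Fin 2) ℤ,
      @Setoid.r _ (QuotientGroup.leftRel (Gamma0 n)) a b → f a = f b := by
    intro a b hab
    rw [QuotientGroup.leftRel_apply] at hab
    set h : Matrix.SpecialLinearGroup (Fin 2) ℤ := a⁻¹ * b with hh
    have hb : b = a * h := by rw [hh]; group
    have hdet : h.1 0 0 * h.1 1 1 - h.1 0 1 * h.1 1 0 = 1 := by
      have := h.2; rwa [Matrix.det_fin_two] at this
    have hc : ((h.1 1 0 : ℤ) : ZMod n) = 0 := hab
    have hu : IsUnit ((h.1 0 0 : ℤ) : ZMod n) := by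
      refine IsUnit.of_mul_eq_one ((h.1 1 1 : ℤ) : ZMod n) ?_
      have := congrArg (fun z : ℤ => (z : ZMod n)) hdet
      push_cast at this
      rw [hc] at this
      simpa using this
    obtain ⟨e00, e01, e10, e11⟩ := Matrix.two_mul_expl a.1 h.1
    have hb00 : ((b.1 0 0 : ℤ) : ZMod n)
        = ((h.1 0 0 : ℤ) : ZMod n) * ((a.1 0 0 : ℤ) : ZMod n) := by
      rw [hb]
      show (((a.1 * h.1) 0 0 : ℤ) : ZMod n) = _
      rw [e00]; push_cast; rw [hc]; ring
    have hb10 : ((b.1 1 0 : ℤ) : ZMod n)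
        = ((h.1 0 0 : ℤ) : ZMod n) * ((a.1 1 0 : ℤ) : ZMod n) := by
      rw [hb]
      show (((a.1 * h.1) 1 0 : ℤ) : ZMod n) = _
      rw [e10]; push_cast; rw [hc]; ring
    apply Quotient.sound'
    rw [orbitRel_apply, mem_orbit_iff]
    obtain ⟨u, huspec⟩ := hu
    rw [← huspec] at hb00 hb10
    refine ⟨u⁻¹, Subtype.ext ?_⟩
    simp only [smul_coe, hb00, hb10, Prod.mk.injEq]
    exact ⟨Units.inv_mul_cancel_left _ _, Units.inv_mul_cancel_left _ _⟩
  let F : (Matrix.SpecialLinearGroup (Fin 2) ℤ ⧸ Gamma0 n) → X n :=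
    fun q => Quotient.liftOn' q f hwd
  have hinj : Function.Injective F := by
    intro q1 q2
    refine Quotient.inductionOn₂' q1 q2 ?_
    intro g g' hfg
    simp only [F, Quotient.liftOn'_mk''] at hfg
    rw [Quotient.eq'', orbitRel_apply, mem_orbit_iff] at hfg
    obtain ⟨u, hu⟩ := hfg
    have hu1 := congrArg (Prod.fst ∘ Subtype.val) hu
    have hu2 := congrArg (Prod.snd ∘ Subtype.val) hu
    simp only [Function.comp_apply, smul_coe] at hu1 hu2
    show Quotient.mk'' g = Quotient.mk'' g'
    rw [Quotient.eq'', QuotientGroup.leftRel_apply]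
    have hinv : (g⁻¹ : Matrix.SpecialLinearGroup (Fin 2) ℤ).1 =
        !![g.1 1 1, -g.1 0 1; -g.1 1 0, g.1 0 0] := by
      rw [Matrix.SpecialLinearGroup.SL2_inv_expl g]
      ext i j
      fin_cases i <;> fin_cases j <;> rfl
    show ((((g⁻¹ * g' : Matrix.SpecialLinearGroup (Fin 2) ℤ).1 1 0 : ℤ)) : ZMod n) = 0
    obtain ⟨e00, e01, e10, e11⟩ :=
      Matrix.two_mul_expl (g⁻¹ : Matrix.SpecialLinearGroup (Fin 2) ℤ).1 g'.1
    rw [show ((g⁻¹ * g' : Matrix.SpecialLinearGroup (Fin 2) ℤ)).1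
        = (g⁻¹ : Matrix.SpecialLinearGroup (Fin 2) ℤ).1 * g'.1 from rfl, e10, hinv]
    push_cast
    simp only [Matrix.cons_val', Matrix.cons_val_zero, Matrix.cons_val_one, Matrix.head_cons,
      Matrix.empty_val', Matrix.cons_val_fin_one, Matrix.head_fin_const, Matrix.of_apply,
      Int.cast_neg, Int.cast_mul, Int.cast_add]
    rw [← hu1, ← hu2]
    push_cast
    ring
  have hsurj : Function.Surjective F := by
    intro q
    refine Quotient.inductionOn' q ?_
    intro v
    rcases v.2 with hx | hx
    · obtain ⟨u, huspec⟩ := hx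
      have hcast : (((((u⁻¹ : (ZMod n)ˣ) * v.1.2 : ZMod n).val : ℤ)) : ZMod n)
          = (u⁻¹ : (ZMod n)ˣ) * v.1.2 := by
        push_cast; rw [ZMod.natCast_val, ZMod.cast_id]
      refine ⟨Quotient.mk''
        ⟨!![1, 0; ((((u⁻¹ : (ZMod n)ˣ) * v.1.2 : ZMod n).val : ℤ)), 1],
          by simp [Matrix.det_fin_two_of]⟩, ?_⟩
      show f _ = Quotient.mk'' v
      apply Quotient.sound'
      rw [orbitRel_apply, mem_orbit_iff]
      refine ⟨u⁻¹, Subtype.ext ?_⟩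
      simp only [smul_coe, Prod.mk.injEq]
      constructor
      · show (↑u⁻¹ : ZMod n) * v.1.1 = _
        rw [← huspec]
        simp
      · show (↑u⁻¹ : ZMod n) * v.1.2 = _
        simp [hcast]
    · obtain ⟨u, huspec⟩ := hx
      have hcast : (((((u⁻¹ : (ZMod n)ˣ) * v.1.1 : ZMod n).val : ℤ)) : ZMod n)
          = (u⁻¹ : (ZMod n)ˣ) * v.1.1 := by
        push_cast; rw [ZMod.natCast_val, ZMod.cast_id]
      refine ⟨Quotient.mk''
        ⟨!![((((u⁻¹ : (ZMod n)ˣ) * v.1.1 : ZMod n).val : ℤ)), -1; 1, 0],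
          by simp [Matrix.det_fin_two_of]⟩, ?_⟩
      show f _ = Quotient.mk'' v
      apply Quotient.sound'
      rw [orbitRel_apply, mem_orbit_iff]
      refine ⟨u⁻¹, Subtype.ext ?_⟩
      simp only [smul_coe, Prod.mk.injEq]
      constructor
      · show (↑u⁻¹ : ZMod n) * v.1.1 = _
        simp [hcast]
      · show (↑u⁻¹ : ZMod n) * v.1.2 = _
        rw [← huspec]
        simp
  rw [Subgroup.index_eq_card]
  exact Nat.card_eq_of_bijective F ⟨hinj, hsurj⟩

theorem index_eq {p : ℕ} (hp : p.Prime) {j : ℕ} (hj : 1 ≤ j) :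
    (Gamma0 (p ^ j)).index = (p + 1) * p ^ (j - 1) := by
  haveI : NeZero (p ^ j) := ⟨pow_ne_zero _ hp.ne_zero⟩
  have h1 := card_coset hp hj
  have h2 := card_prim_mul (p ^ j)
  have h3 := card_prim_add (p ^ j)
  have h4 := card_units_add (p ^ j)
  have ht : Nat.totient (p ^ j) = p ^ (j - 1) * (p - 1) :=
    Nat.totient_prime_pow hp (by omega)
  have hU : Nat.card (ZMod (p ^ j))ˣ = p ^ (j - 1) * (p - 1) := by
    rw [Nat.card_eq_fintype_card, ZMod.card_units_eq_totient, ht]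
  have hpj : p ^ j = p ^ (j - 1) * p := by
    rw [← pow_succ]; congr 1; omega
  have hq : p ^ (j - 1) * (p - 1) + p ^ (j - 1) = p ^ j := by
    obtain ⟨m, rfl⟩ : ∃ m, p = m + 1 := ⟨p - 1, by have := hp.two_le; omega⟩
    rw [hpj, show m + 1 - 1 = m from rfl]
    ring
  have hs : Nat.card {x : ZMod (p ^ j) // ¬ IsUnit x} = p ^ (j - 1) := by omega
  have hkey : ((p + 1) * p ^ (j - 1)) * (p ^ (j - 1) * (p - 1)) + (p ^ (j - 1)) ^ 2
      = (p ^ j) ^ 2 := by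
    obtain ⟨m, rfl⟩ : ∃ m, p = m + 1 := ⟨p - 1, by have := hp.two_le; omega⟩
    rw [hpj, show m + 1 - 1 = m from rfl]
    ring
  rw [h1]
  have hUpos : 0 < p ^ (j - 1) * (p - 1) :=
    Nat.mul_pos (pow_pos hp.pos _) (by have := hp.two_le; omega)
  rw [hU] at h2
  rw [hs] at h3
  have hfin : Nat.card (X (p ^ j)) * (p ^ (j - 1) * (p - 1))
      = ((p + 1) * p ^ (j - 1)) * (p ^ (j - 1) * (p - 1)) := by omega
  exact Nat.eq_of_mul_eq_mul_right hUpos hfin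

end Stmt4Aux

/-- `H m = Γ₀(m)` : matrices in `SL(2, ℤ)` whose lower-left entry is divisible by `m`. -/
def H (m : ℕ) : Subgroup (Matrix.SpecialLinearGroup (Fin 2) ℤ) := Gamma0 m

theorem stmt4 (p : ℕ) (hp : p.Prime) :
    (H p).index = p + 1 ∧ ∀ j : ℕ, 1 ≤ j → (H (p ^ j)).index = (p + 1) * p ^ (j - 1) := by
  constructor
  · have h := Stmt4Aux.index_eq hp (le_refl 1)
    simp only [pow_one, Nat.sub_self, pow_zero, mul_one] at h
    exact h
  · intro j hj
    exact Stmt4Aux.index_eq hp hj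
end

section
/- For an odd prime p, every element of PSL(2, ℤ/pℤ) has order at most p, and the element represented by the matrix (1 1; 0 1) has order exactly p. -/
open Polynomial

lemma neg_one_zpow_cases {G : Type*} [Group G] [HasDistribNeg G] (k : ℤ) :
    (-1 : G) ^ k = 1 ∨ (-1 : G) ^ k = -1 := by
  rcases Int.even_or_odd k with h | h
  · exact Or.inl h.neg_one_zpow
  · obtain ⟨m, rfl⟩ := h
    right
    rw [zpow_add, zpow_one, Even.neg_one_zpow ⟨m, two_mul m⟩, one_mul]

lemma ch_fin_two {R : Type*} [CommRing R] (a b c d : R) :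
    aeval !![a, b; c, d] (X ^ 2 - C (a + d) * X + C (a * d - b * c)) = 0 := by
  simp only [map_add, map_sub, map_mul, map_pow, aeval_X, aeval_C]
  rw [Algebra.algebraMap_eq_smul_one, Algebra.algebraMap_eq_smul_one, Matrix.one_fin_two,
    pow_two, Matrix.mul_fin_two]
  ext i j
  fin_cases i <;> fin_cases j <;>
    simp [Fin.mk_zero, Fin.mk_one, Matrix.mul_apply, Fin.sum_univ_two,
      Matrix.algebraMap_matrix_apply] <;> ring

set_option maxHeartbeats 1000000 in
set_option synthInstance.maxHeartbeats 200000 in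
lemma sl2_pow_eq_pm_one (p : ℕ) (hp : p.Prime) (hodd : p ≠ 2)
    (A : Matrix.SpecialLinearGroup (Fin 2) (ZMod p)) :
    ∃ k, 0 < k ∧ k ≤ p ∧ (A ^ k = 1 ∨ A ^ k = -1) := by
  haveI : Fact p.Prime := ⟨hp⟩
  have h2p := hp.two_le
  set M : Matrix (Fin 2) (Fin 2) (ZMod p) := A.1 with hM
  set t : ZMod p := M 0 0 + M 1 1 with ht
  have hdet : M 0 0 * M 1 1 - M 0 1 * M 1 0 = 1 := by
    have h := A.2; rwa [Matrix.det_fin_two] at h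
  have hMe : M = !![M 0 0, M 0 1; M 1 0, M 1 1] := by
    ext i j; fin_cases i <;> fin_cases j <;> rfl
  set f : (ZMod p)[X] := X ^ 2 - C t * X + 1 with hf
  have hfM : aeval M f = 0 := by
    have h := ch_fin_two (M 0 0) (M 0 1) (M 1 0) (M 1 1)
    rw [hdet, C_1] at h
    rw [hf, ht, hMe]
    exact h
  have hdvd_zero : ∀ g : (ZMod p)[X], f ∣ g → aeval M g = 0 := by
    rintro g ⟨q, rfl⟩
    rw [map_mul, hfM, zero_mul]
  -- transfer matrix equalities to the special linear group
  have hlift1 : ∀ k : ℕ, M ^ k = 1 → A ^ k = 1 := by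
    intro k h
    apply Subtype.coe_injective
    simp only [Matrix.SpecialLinearGroup.coe_pow, Matrix.SpecialLinearGroup.coe_one]
    rw [← hM, h]
  have hliftneg : ∀ k : ℕ, M ^ k = -1 → A ^ k = -1 := by
    intro k h
    apply Subtype.coe_injective
    simp only [Matrix.SpecialLinearGroup.coe_pow, Matrix.SpecialLinearGroup.coe_neg,
      Matrix.SpecialLinearGroup.coe_one]
    rw [← hM, h]
  by_cases hroot : ∃ α : ZMod p, α ^ 2 - t * α + 1 = 0
  · obtain ⟨α, hα⟩ := hroot
    have hα0 : α ≠ 0 := by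
      rintro rfl; simp at hα
    have hαβ : α * (t - α) = 1 := by linear_combination -hα
    have hfactor : f = (X - C α) * (X - C (t - α)) := by
      have h1 : (C α : (ZMod p)[X]) * C (t - α) = 1 := by rw [← C_mul, hαβ, C_1]
      have h2 : (C t : (ZMod p)[X]) = C α + C (t - α) := by rw [← C_add]; ring_nf
      rw [hf, h2]
      linear_combination -h1
    by_cases heq : α = t - α
    · -- double root α = ±1
      have hα1 : α = 1 ∨ α = -1 := by
        apply mul_self_eq_one_iff.mp
        calc α * α = α * (t - α) := by rw [← heq]
        _ = 1 := hαβ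
      have hdvd : f ∣ X ^ p - C α := by
        have hsq : f = (X - C α) ^ 2 := by rw [hfactor, ← heq, sq]
        have hpow : (X - C α : (ZMod p)[X]) ^ p = X ^ p - C α := by
          rw [sub_pow_char, ← C_pow, ZMod.pow_card]
        rw [hsq, ← hpow]
        exact pow_dvd_pow _ h2p
      have hMp : M ^ p = algebraMap (ZMod p) _ α := by
        have h := hdvd_zero _ hdvd
        rw [map_sub, map_pow, aeval_X, aeval_C, sub_eq_zero] at h
        exact h
      refine ⟨p, hp.pos, le_refl p, ?_⟩
      rcases hα1 with h1 | h1
      · left; apply hlift1; rw [hMp, h1, map_one]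
      · right; apply hliftneg; rw [hMp, h1, map_neg, map_one]
    · -- two distinct roots in ZMod p
      have hβ0 : t - α ≠ 0 := by
        intro h; rw [h, mul_zero] at hαβ; exact zero_ne_one hαβ
      have hdvd : f ∣ X ^ (p - 1) - 1 := by
        rw [hfactor]
        have cop : IsCoprime (X - C α) (X - C (t - α) : (ZMod p)[X]) :=
          Polynomial.isCoprime_X_sub_C_of_isUnit_sub
            (isUnit_iff_ne_zero.mpr (sub_ne_zero.mpr heq))
        refine cop.mul_dvd ?_ ?_
        · rw [dvd_iff_isRoot]
          simp [IsRoot, ZMod.pow_card_sub_one_eq_one hα0]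
        · rw [dvd_iff_isRoot]
          simp [IsRoot, ZMod.pow_card_sub_one_eq_one hβ0]
      have hMp : M ^ (p - 1) = 1 := by
        have h := hdvd_zero _ hdvd
        rw [map_sub, map_pow, aeval_X, map_one, sub_eq_zero] at h
        exact h
      exact ⟨p - 1, by omega, Nat.sub_le p 1, Or.inl (hlift1 _ hMp)⟩
  · -- f has no root : it is irreducible, pass to the field (ZMod p)[X]/(f)
    push_neg at hroot
    have hmonic : f.Monic := by rw [hf]; monicity!
    have hdeg : f.natDegree = 2 := by rw [hf]; compute_degree!
    have hirr : Irreducible f := by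
      rw [hmonic.irreducible_iff_roots_eq_zero_of_degree_le_three (by omega) (by omega)]
      rw [Multiset.eq_zero_iff_forall_notMem]
      intro α hα
      rw [mem_roots hmonic.ne_zero] at hα
      apply hroot α
      have h := hα
      rw [hf] at h
      simpa [IsRoot] using h
    haveI : Fact (Irreducible f) := ⟨hirr⟩
    set x : AdjoinRoot f := AdjoinRoot.root f with hxdef
    set t' : AdjoinRoot f := algebraMap (ZMod p) (AdjoinRoot f) t with ht'
    have hx : x ^ 2 - t' * x + 1 = 0 := by
      have h : (aeval x) (X ^ 2 - C t * X + 1) = 0 := by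
        rw [AdjoinRoot.aeval_eq, ← hf, AdjoinRoot.mk_self]
      simp only [map_add, map_sub, map_mul, map_pow, aeval_X, aeval_C, map_one] at h
      rw [← ht'] at h
      exact h
    haveI : CharP (AdjoinRoot f) p :=
      charP_of_injective_algebraMap (algebraMap (ZMod p) (AdjoinRoot f)).injective p
    have ht'p : t' ^ p = t' := by rw [ht', ← map_pow, ZMod.pow_card]
    have hfrob : (x ^ p) ^ 2 - t' * x ^ p + 1 = 0 := by
      have h2 : (x ^ 2 - t' * x + 1) ^ p = 0 := by
        rw [hx, zero_pow hp.ne_zero]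
      rw [add_pow_char, sub_pow_char, mul_pow, one_pow] at h2
      calc (x ^ p) ^ 2 - t' * x ^ p + 1
          = (x ^ 2) ^ p - t' ^ p * x ^ p + 1 := by
            rw [ht'p, ← pow_mul, ← pow_mul, mul_comm 2 p]
        _ = 0 := h2
    have hxy : x * (t' - x) = 1 := by linear_combination -hx
    have hsplit : (x ^ p - x) * (x ^ p - (t' - x)) = 0 := by linear_combination hfrob - hx
    have hx0 : x ≠ 0 := by
      intro h0; rw [h0, zero_mul] at hxy; exact zero_ne_one hxy
    have transfer : ∀ (k : ℕ) (c : ZMod p), x ^ k = algebraMap (ZMod p) (AdjoinRoot f) c →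
        M ^ k = algebraMap (ZMod p) (Matrix (Fin 2) (Fin 2) (ZMod p)) c := by
      intro k c h
      have hmk : AdjoinRoot.mk f (X ^ k - C c) = 0 := by
        rw [map_sub, map_pow, AdjoinRoot.mk_X, AdjoinRoot.mk_C, sub_eq_zero, ← hxdef]
        rw [AdjoinRoot.algebraMap_eq] at h
        exact h
      have h0 := hdvd_zero _ (AdjoinRoot.mk_eq_zero.mp hmk)
      rw [map_sub, map_pow, aeval_X, aeval_C, sub_eq_zero] at h0
      exact h0
    rcases mul_eq_zero.mp hsplit with h | h
    · -- x^p = x : order divides p - 1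
      have h' : x ^ p = x := sub_eq_zero.mp h
      have hxp : x ^ (p - 1) = 1 := by
        have hc : x ^ (p - 1) * x = 1 * x := by
          rw [one_mul, ← pow_succ, Nat.sub_add_cancel hp.one_le, h']
        exact mul_right_cancel₀ hx0 hc
      have hM1 : M ^ (p - 1) = 1 := by
        have := transfer (p - 1) 1 (by rw [hxp, map_one])
        rwa [map_one] at this
      exact ⟨p - 1, by omega, Nat.sub_le p 1, Or.inl (hlift1 _ hM1)⟩
    · -- x^p = t' - x : x^(p+1) = 1
      have h' : x ^ p = t' - x := sub_eq_zero.mp h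
      have hx1 : x ^ (p + 1) = 1 := by
        rw [pow_succ, h', mul_comm, hxy]
      have hpodd : Odd p := hp.odd_of_ne_two hodd
      have hm2 : (p + 1) / 2 * 2 = p + 1 := by
        obtain ⟨m, hm⟩ := hpodd
        omega
      have hsq : (x ^ ((p + 1) / 2)) * (x ^ ((p + 1) / 2)) = 1 := by
        rw [← pow_add, show (p + 1) / 2 + (p + 1) / 2 = p + 1 by omega, hx1]
      rcases mul_self_eq_one_iff.mp hsq with h1 | h1
      · refine ⟨(p + 1) / 2, by omega, by omega, Or.inl (hlift1 _ ?_)⟩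
        have := transfer ((p + 1) / 2) 1 (by rw [h1, map_one])
        rwa [map_one] at this
      · refine ⟨(p + 1) / 2, by omega, by omega, Or.inr (hliftneg _ ?_)⟩
        have := transfer ((p + 1) / 2) (-1) (by rw [h1, map_neg, map_one])
        rwa [map_neg, map_one] at this

instance zpowersNegOneNormal (q : ℕ) :
    (Subgroup.zpowers (-1 : Matrix.SpecialLinearGroup (Fin 2) (ZMod q))).Normal := by
  constructor
  intro x hx g
  rw [Subgroup.mem_zpowers_iff] at hx
  obtain ⟨k, rfl⟩ := hx
  have hc : Commute g ((-1 : Matrix.SpecialLinearGroup (Fin 2) (ZMod q)) ^ k) :=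
    (Commute.neg_one_right g).zpow_right k
  rw [hc.eq, mul_assoc]
  simp only [mul_inv_cancel, mul_one]
  exact Subgroup.mem_zpowers_iff.mpr ⟨k, rfl⟩

/-- `PSL(2, ℤ/qℤ) = SL(2, ℤ/qℤ)/{±I}`. -/
abbrev PSL (q : ℕ) :=
  Matrix.SpecialLinearGroup (Fin 2) (ZMod q) ⧸
    Subgroup.zpowers (-1 : Matrix.SpecialLinearGroup (Fin 2) (ZMod q))

theorem stmt13 (p : ℕ) (hp : p.Prime) (hodd : p ≠ 2) :
    (∀ x : PSL p, orderOf x ≤ p) ∧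
    orderOf ((QuotientGroup.mk
      (⟨!![1, 1; 0, 1], by norm_num [Matrix.det_fin_two_of]⟩ :
        Matrix.SpecialLinearGroup (Fin 2) (ZMod p))) : PSL p) = p := by
  haveI : Fact p.Prime := ⟨hp⟩
  constructor
  · intro x
    obtain ⟨A, rfl⟩ := QuotientGroup.mk_surjective x
    obtain ⟨k, hk0, hkp, hA⟩ := sl2_pow_eq_pm_one p hp hodd A
    refine le_trans (orderOf_le_of_pow_eq_one hk0 ?_) hkp
    rw [← QuotientGroup.mk_pow, QuotientGroup.eq_one_iff]
    rcases hA with h | h <;> rw [h]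
    · exact Subgroup.one_mem _
    · exact Subgroup.mem_zpowers _
  · set U : Matrix.SpecialLinearGroup (Fin 2) (ZMod p) :=
      ⟨!![1, 1; 0, 1], by norm_num [Matrix.det_fin_two_of]⟩ with hU
    have hUn : ∀ n : ℕ, (!![1, 1; 0, 1] : Matrix (Fin 2) (Fin 2) (ZMod p)) ^ n
        = !![1, (n : ZMod p); 0, 1] := by
      intro n
      induction n with
      | zero => simp [Matrix.one_fin_two]
      | succ n ih =>
        rw [pow_succ, ih, Matrix.mul_fin_two]
        push_cast
        congr 1 <;> ring_nf
    have hUp : (QuotientGroup.mk U : PSL p) ^ p = 1 := by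
      rw [← QuotientGroup.mk_pow, QuotientGroup.eq_one_iff]
      have hUv : (U : Matrix (Fin 2) (Fin 2) (ZMod p)) = !![1, 1; 0, 1] := rfl
      have : U ^ p = 1 := by
        apply Subtype.coe_injective
        simp only [Matrix.SpecialLinearGroup.coe_pow, Matrix.SpecialLinearGroup.coe_one]
        rw [hUn p, ZMod.natCast_self, Matrix.one_fin_two]
      rw [this]
      exact Subgroup.one_mem _
    have hd : orderOf (QuotientGroup.mk U : PSL p) ∣ p := orderOf_dvd_of_pow_eq_one hUp
    rcases hp.eq_one_or_self_of_dvd _ hd with h1 | h1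
    · exfalso
      have hone : (QuotientGroup.mk U : PSL p) = 1 := orderOf_eq_one_iff.mp h1
      rw [QuotientGroup.eq_one_iff, Subgroup.mem_zpowers_iff] at hone
      obtain ⟨k, hk⟩ := hone
      have h10 : (1 : ZMod p) ≠ 0 := one_ne_zero
      rcases neg_one_zpow_cases (G := Matrix.SpecialLinearGroup (Fin 2) (ZMod p)) k
          with h | h <;> rw [h] at hk
      · have := congrFun (congrFun (congrArg Subtype.val hk) 0) 1
        rw [Matrix.SpecialLinearGroup.coe_one] at this
        simp [hU, Matrix.one_apply] at this
      · have := congrFun (congrFun (congrArg Subtype.val hk) 0) 1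
        rw [Matrix.SpecialLinearGroup.coe_neg, Matrix.SpecialLinearGroup.coe_one] at this
        simp [hU, Matrix.one_apply] at this
    · exact h1
end

section
/- If q = 2p where p is an odd prime not divisible by 3 (i.e. p ≠ 3), the element of PSL(2, ℤ/2pℤ) represented by the matrix (p+1, 1; p, 1) has order exactly 3p. -/
lemma unipPow {R : Type*} [CommRing R] (b : R) (n : ℕ) :
    (!![1, b; 0, 1] : Matrix (Fin 2) (Fin 2) R) ^ n = !![1, n * b; 0, 1] := by
  induction n with
  | zero => simp [Matrix.one_fin_two]
  | succ k ih =>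
    rw [pow_succ, ih, Matrix.mul_fin_two]
    push_cast
    congr 1 <;> ring

lemma memZpowersNegOne {q : ℕ} (x : Matrix.SpecialLinearGroup (Fin 2) (ZMod q))
    (hx : x ∈ Subgroup.zpowers (-1 : Matrix.SpecialLinearGroup (Fin 2) (ZMod q))) :
    x = 1 ∨ x = -1 := by
  rw [Subgroup.mem_zpowers_iff] at hx
  obtain ⟨k, rfl⟩ := hx
  have hsq : ((-1 : Matrix.SpecialLinearGroup (Fin 2) (ZMod q)) ^ (2 : ℤ)) = 1 := by
    rw [zpow_two]; simp
  rcases Int.even_or_odd k with ⟨m, hm⟩ | ⟨m, hm⟩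
  · left
    rw [hm, ← two_mul, _root_.zpow_mul, hsq, _root_.one_zpow]
  · right
    rw [hm, _root_.zpow_add, _root_.zpow_mul, hsq, _root_.one_zpow, one_mul, zpow_one]

lemma cubeEq {R : Type*} [CommRing R] (t : R) (h1 : t * t = t) (h2 : t + t = 0) :
    (!![t + 1, 1; t, 1] : Matrix (Fin 2) (Fin 2) R) ^ 3 = !![1, t + 3; 0, 1] := by
  rw [pow_succ, pow_succ, pow_one, Matrix.mul_fin_two, Matrix.mul_fin_two]
  ext i j
  fin_cases i <;> fin_cases j <;> simp
  · linear_combination (t + 6) * h1 + 6 * h2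
  · linear_combination h1 + 2 * h2
  · linear_combination (t + 5) * h1 + 4 * h2
  · linear_combination h1 + 2 * h2

theorem stmt15 (p : ℕ) (hp : p.Prime) (h2 : p ≠ 2) (h3 : p ≠ 3) :
    orderOf ((QuotientGroup.mk
      (⟨!![(p : ZMod (2 * p)) + 1, 1; (p : ZMod (2 * p)), 1],
          by rw [Matrix.det_fin_two_of]; ring⟩ :
        Matrix.SpecialLinearGroup (Fin 2) (ZMod (2 * p)))) : PSL (2 * p)) = 3 * p := by
  have h4 : p ≠ 4 := by rintro rfl; norm_num at hp
  have hp5 : 5 ≤ p := by have := hp.two_le; omega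
  have hodd : p % 2 = 1 := hp.eq_two_or_odd.resolve_left h2
  set t : ZMod (2 * p) := (p : ZMod (2 * p)) with ht
  have h1 : t * t = t := by
    rw [ht, ← Nat.cast_mul, ZMod.natCast_eq_natCast_iff]
    have hd : 2 * p ∣ p * p - p := by
      obtain ⟨m, hm⟩ : ∃ m, p = 2 * m + 1 := ⟨p / 2, by omega⟩
      exact ⟨m, by rw [hm]; ring_nf; omega⟩
    exact ((Nat.modEq_iff_dvd' (Nat.le_mul_of_pos_left p hp.pos)).mpr hd).symm
  have h2t : t + t = 0 := by
    have hz := ZMod.natCast_self (2 * p)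
    push_cast at hz
    rw [ht, ← two_mul]
    exact hz
  set M : Matrix.SpecialLinearGroup (Fin 2) (ZMod (2 * p)) :=
    ⟨!![t + 1, 1; t, 1], by rw [Matrix.det_fin_two_of]; ring⟩ with hM
  have hM3 : (M ^ 3 : Matrix.SpecialLinearGroup (Fin 2) (ZMod (2 * p))).val
      = !![1, t + 3; 0, 1] := by
    rw [Matrix.SpecialLinearGroup.coe_pow]
    exact cubeEq t h1 h2t
  have hpowtop : M ^ (3 * p) = 1 := by
    apply Subtype.ext
    rw [Matrix.SpecialLinearGroup.coe_pow, pow_mul,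
      ← Matrix.SpecialLinearGroup.coe_pow, hM3, unipPow]
    have hz : (p : ZMod (2 * p)) * (t + 3) = 0 := by
      rw [← ht]; linear_combination h1 + 2 * h2t
    rw [hz, Matrix.SpecialLinearGroup.coe_one, Matrix.one_fin_two]
  have hx3 : (QuotientGroup.mk M : PSL (2 * p)) ^ 3 ≠ 1 := by
    rw [← QuotientGroup.mk_pow]
    intro hcon
    have hmem := (QuotientGroup.eq_one_iff _).mp hcon
    rcases memZpowersNegOne _ hmem with h | h
    · have h01 := congrArg (fun g => g.val 0 1) h
      simp only [hM3] at h01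
      have h10 : (t + 3 : ZMod (2 * p)) = 0 := by
        simpa [Matrix.SpecialLinearGroup.coe_one] using h01
      rw [ht, show ((3 : ZMod (2 * p))) = ((3 : ℕ) : ZMod (2 * p)) by push_cast; ring,
        ← Nat.cast_add, ZMod.natCast_eq_zero_iff] at h10
      have := Nat.le_of_dvd (by omega) h10
      omega
    · have h00 := congrArg (fun g => g.val 0 0) h
      simp only [hM3] at h00
      have h11 : (1 : ZMod (2 * p)) = -1 := by
        simpa [Matrix.SpecialLinearGroup.coe_neg, Matrix.SpecialLinearGroup.coe_one] using h00
      have h20 : ((2 : ℕ) : ZMod (2 * p)) = 0 := by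
        push_cast
        linear_combination h11
      rw [ZMod.natCast_eq_zero_iff] at h20
      have := Nat.le_of_dvd (by omega) h20
      omega
  have hxp : (QuotientGroup.mk M : PSL (2 * p)) ^ p ≠ 1 := by
    rw [← QuotientGroup.mk_pow]
    intro hcon
    have hmem := (QuotientGroup.eq_one_iff _).mp hcon
    have hdvd : (2 : ℕ) ∣ 2 * p := ⟨p, rfl⟩
    set f : ZMod (2 * p) →+* ZMod 2 := ZMod.castHom hdvd (ZMod 2) with hf
    set F := Matrix.SpecialLinearGroup.map (n := Fin 2) f with hF
    set B : Matrix.SpecialLinearGroup (Fin 2) (ZMod 2) := ⟨!![0, 1; 1, 1], by decide⟩ with hB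
    have hFM : F M = B := by
      apply Subtype.ext
      have hft : f t = 1 := by
        rw [ht, map_natCast]
        have hcast : ((p : ℕ) : ZMod 2) = ((1 : ℕ) : ZMod 2) := by
          rw [ZMod.natCast_eq_natCast_iff']
          omega
        simpa using hcast
      ext i j
      fin_cases i <;> fin_cases j <;>
        simp [hF, hB, Matrix.SpecialLinearGroup.map_apply_coe, hft, map_add, map_one]
      · show f (t + 1) = 0; rw [map_add, hft, map_one]; decide
      · show f 1 = 1; exact map_one f
      · show f t = 1; exact hft
      · show f 1 = 1; exact map_one f
    have hBp : B ^ p = 1 := by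
      rcases memZpowersNegOne _ hmem with h | h
      · have hh := congrArg F h
        rw [map_pow, hFM, map_one] at hh
        exact hh
      · have hh := congrArg F h
        rw [map_pow, hFM] at hh
        have hFneg : F (-1) = 1 := by
          apply Subtype.ext
          rw [hF, Matrix.SpecialLinearGroup.map_apply_coe,
            Matrix.SpecialLinearGroup.coe_neg, Matrix.SpecialLinearGroup.coe_one,
            map_neg, map_one, Matrix.SpecialLinearGroup.coe_one]
          ext i j
          fin_cases i <;> fin_cases j <;>
            simp [Matrix.neg_apply, Matrix.one_apply] <;> decide
        rw [hFneg] at hh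
        exact hh
    have hB3 : B ^ 3 = 1 := by
      apply Subtype.ext
      rw [Matrix.SpecialLinearGroup.coe_pow, Matrix.SpecialLinearGroup.coe_one]
      show (!![0, 1; 1, 1] : Matrix (Fin 2) (Fin 2) (ZMod 2)) ^ 3 = 1
      rw [pow_succ, pow_succ, pow_one, Matrix.mul_fin_two, Matrix.mul_fin_two,
        Matrix.one_fin_two]
      ext i j
      fin_cases i <;> fin_cases j <;> simp <;> decide
    have hmod : p % 3 = 1 ∨ p % 3 = 2 := by
      have hnd : ¬ (3 ∣ p) := by
        intro hd
        exact h3 ((Nat.prime_dvd_prime_iff_eq (by norm_num) hp).mp hd).symm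
      omega
    have hsplit : B ^ p = B ^ (p % 3) := by
      conv_lhs => rw [← Nat.div_add_mod p 3]
      rw [pow_add, pow_mul, hB3, one_pow, one_mul]
    have hBne1 : B ≠ 1 := by
      intro hcon1
      have he := congrArg (fun g => g.val 0 0) hcon1
      simp only [hB, Matrix.SpecialLinearGroup.coe_one] at he
      revert he
      decide
    have hB2ne1 : B ^ 2 ≠ 1 := by
      intro hcon1
      have he := congrArg (fun g => g.val 1 1) hcon1
      simp only [Matrix.SpecialLinearGroup.coe_pow,
        Matrix.SpecialLinearGroup.coe_one] at he
      have he2 : ((!![0, 1; 1, 1] : Matrix (Fin 2) (Fin 2) (ZMod 2)) ^ 2) 1 1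
          = (1 : Matrix (Fin 2) (Fin 2) (ZMod 2)) 1 1 := he
      rw [pow_two, Matrix.mul_fin_two, Matrix.one_fin_two] at he2
      revert he2
      decide
    rcases hmod with h | h
    · rw [hsplit, h, pow_one] at hBp
      exact hBne1 hBp
    · rw [hsplit, h] at hBp
      exact hB2ne1 hBp
  have key : orderOf (QuotientGroup.mk M : PSL (2 * p)) = 3 * p := by
    apply orderOf_eq_of_pow_and_pow_div_prime (by positivity)
    · rw [← QuotientGroup.mk_pow, hpowtop, QuotientGroup.mk_one]
    · intro q hq hqd
      rcases (Nat.Prime.dvd_mul hq).mp hqd with h | h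
      · have hq3 : q = 3 := (Nat.prime_dvd_prime_iff_eq hq (by norm_num)).mp h
        rw [hq3, Nat.mul_div_cancel_left p (by norm_num)]
        exact hxp
      · have hqp : q = p := (Nat.prime_dvd_prime_iff_eq hq hp).mp h
        rw [hqp, Nat.mul_div_cancel _ hp.pos]
        exact hx3
  convert key using 2
end

section
/- Let Γ be a finite-index subgroup of SL(2,ℤ). Then [SL(2,ℤ) : Γ ∪ -Γ] = Σ_{κ ∈ (ℚ∪{∞})/Γ} W_Γ(κ), the sum of cusp widths over all cusps of Γ. -/
open Matrix CongruenceSubgroup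

local notation "SL2Z" => Matrix.SpecialLinearGroup (Fin 2) ℤ

/-- `±Γ` : the subgroup generated by `Γ` and `-1`. -/
def pm (Γ : Subgroup SL2Z) : Subgroup SL2Z := Γ ⊔ Subgroup.zpowers (-1)

/-- Matrices in `SL(2, ℤ)` whose upper-right entry is divisible by `n`. -/
def GammaUpper (n : ℕ) : Subgroup SL2Z where
  carrier := { g | ((g 0 1 : ℤ) : ZMod n) = 0 }
  one_mem' := by simp
  mul_mem' := by
    intro a b ha hb
    have h := (Matrix.two_mul_expl a.1 b.1).2.1
    simp only [Set.mem_setOf_eq] at *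
    rw [Matrix.SpecialLinearGroup.coe_mul, h]
    push_cast
    rw [ha, hb]
    ring
  inv_mem' := by
    intro a ha
    simp only [Set.mem_setOf_eq] at *
    rw [Matrix.SpecialLinearGroup.SL2_inv_expl a]
    simp [ha]

/-- The group `Γ_q^n`: `a ≡ d ≡ 1, c ≡ 0 (mod q)` and `b ≡ 0 (mod n)`. -/
def GammaQN (q n : ℕ) : Subgroup SL2Z := Gamma1 q ⊓ GammaUpper n

/-- The Möbius action of `SL(2, ℤ)` on `ℚ ∪ {∞}`, with `∞` encoded as `none`. -/
def moebius (g : Matrix.SpecialLinearGroup (Fin 2) ℤ) (x : Option ℚ) : Option ℚ :=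
  match x with
  | none => if ((g.1 1 0 : ℤ) : ℚ) = 0 then none
      else some (((g.1 0 0 : ℤ) : ℚ) / ((g.1 1 0 : ℤ) : ℚ))
  | some t => if ((g.1 1 0 : ℤ) : ℚ) * t + ((g.1 1 1 : ℤ) : ℚ) = 0 then none
      else some ((((g.1 0 0 : ℤ) : ℚ) * t + ((g.1 0 1 : ℤ) : ℚ)) /
        (((g.1 1 0 : ℤ) : ℚ) * t + ((g.1 1 1 : ℤ) : ℚ)))

/-- Two cusps are `Γ`-equivalent if some element of `Γ` maps one to the other. -/
def cuspRel (G : Subgroup (Matrix.SpecialLinearGroup (Fin 2) ℤ)) (x y : Option ℚ) : Prop :=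
  ∃ γ ∈ G, moebius γ x = y

/-- The number of cusps of `Γ`, i.e. the number of `Γ`-orbits on `ℚ ∪ {∞}`. -/
noncomputable def numCusps (G : Subgroup (Matrix.SpecialLinearGroup (Fin 2) ℤ)) : ℕ :=
  Nat.card (Quot (cuspRel G))

/-- `IsWidth Γ κ R` : `R` is the cusp width of `κ` with respect to `Γ`, i.e. for any
`N ∈ SL(2, ℤ)` with `N∞ = κ`, the elements of `N⁻¹(Γ ∪ -Γ)N` fixing `∞` are exactly
`±(1, mR; 0, 1)`, `m ∈ ℤ`. -/
def IsWidth (G : Subgroup (Matrix.SpecialLinearGroup (Fin 2) ℤ)) (κ : Option ℚ) (R : ℕ) :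
    Prop :=
  0 < R ∧ ∀ N : Matrix.SpecialLinearGroup (Fin 2) ℤ, moebius N none = κ →
    {M : Matrix.SpecialLinearGroup (Fin 2) ℤ |
        (N * M * N⁻¹ ∈ G ∨ -(N * M * N⁻¹) ∈ G) ∧ moebius M none = none}
      = {M : Matrix.SpecialLinearGroup (Fin 2) ℤ |
          ∃ m : ℤ, M = ModularGroup.T ^ (m * R) ∨ M = -(ModularGroup.T ^ (m * R))}

/-- raw version over ℚ -/
def mob (a b c d : ℚ) (x : Option ℚ) : Option ℚ :=
  match x with
  | none => if c = 0 then none else some (a / c)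
  | some t => if c * t + d = 0 then none else some ((a * t + b) / (c * t + d))

lemma mob_none (a b c d : ℚ) :
    mob a b c d none = if c = 0 then none else some (a / c) := rfl

lemma mob_some (a b c d t : ℚ) :
    mob a b c d (some t) = if c * t + d = 0 then none
      else some ((a * t + b) / (c * t + d)) := rfl

lemma moebius_eq_mob (g : SL2Z) (x : Option ℚ) :
    moebius g x = mob (g.1 0 0 : ℤ) (g.1 0 1 : ℤ) (g.1 1 0 : ℤ) (g.1 1 1 : ℤ) x := by
  cases x <;> rfl

lemma mob_mul (a b c d e f k l : ℚ) (hg : a * d - b * c = 1) (hh : e * l - f * k = 1)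
    (x : Option ℚ) :
    mob (a*e + b*k) (a*f + b*l) (c*e + d*k) (c*f + d*l) x = mob a b c d (mob e f k l x) := by
  cases x with
  | none =>
    rw [mob_none, mob_none]
    by_cases hk : k = 0
    · have he : e ≠ 0 := by intro h0; rw [h0, hk] at hh; simp at hh
      rw [if_pos hk, mob_none]
      by_cases hc : c = 0
      · rw [if_pos hc, if_pos (by rw [hc, hk]; ring)]
      · rw [if_neg hc, if_neg (by rw [hk]; simpa using mul_ne_zero hc he)]
        congr 1
        rw [hk]
        field_simp
        ring
    · rw [if_neg hk, mob_some]
      have heq : c * (e / k) + d = (c * e + d * k) / k := by field_simp; try ring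
      have hneq : a * (e / k) + b = (a * e + b * k) / k := by field_simp; try ring
      by_cases h0 : c * e + d * k = 0
      · rw [if_pos h0, if_pos (by rw [heq, h0, zero_div])]
      · rw [if_neg h0, if_neg (by rw [heq]; exact div_ne_zero h0 hk)]
        congr 1
        rw [heq, hneq, div_div_div_cancel_right₀]
        exact hk
  | some t =>
    rw [mob_some, mob_some]
    by_cases hk : k * t + l = 0
    · rw [if_pos hk, mob_none]
      have hkef : k * (e * t + f) = -1 := by
        have h1 : k * (e*t+f) = e * (k*t+l) - (e*l - f*k) := by ring
        rw [h1, hk, hh]; ring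
      have hne : e * t + f ≠ 0 := by
        intro h0; rw [h0, mul_zero] at hkef; norm_num at hkef
      have hd : (c*e+d*k) * t + (c*f+d*l) = c * (e*t+f) := by
        have h2 : (c*e+d*k) * t + (c*f+d*l) = c * (e*t+f) + d * (k*t+l) := by ring
        rw [h2, hk]; ring
      have hn2 : (a*e+b*k) * t + (a*f+b*l) = a * (e*t+f) := by
        have h2 : (a*e+b*k) * t + (a*f+b*l) = a * (e*t+f) + b * (k*t+l) := by ring
        rw [h2, hk]; ring
      by_cases hc : c = 0
      · rw [if_pos hc, if_pos (by rw [hd, hc, zero_mul])]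
      · rw [if_neg hc, if_neg (by rw [hd]; exact mul_ne_zero hc hne)]
        congr 1
        rw [hd, hn2, mul_div_mul_right _ _ hne]
    · rw [if_neg hk, mob_some]
      have hk' : k * t + l ≠ 0 := hk
      have hd : c * ((e*t+f)/(k*t+l)) + d = ((c*e+d*k)*t + (c*f+d*l)) / (k*t+l) := by
        rw [mul_div_assoc', div_add' _ _ _ hk']; congr 1; ring
      have hn : a * ((e*t+f)/(k*t+l)) + b = ((a*e+b*k)*t + (a*f+b*l)) / (k*t+l) := by
        rw [mul_div_assoc', div_add' _ _ _ hk']; congr 1; ring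
      by_cases h0 : (c*e+d*k)*t + (c*f+d*l) = 0
      · rw [if_pos h0, if_pos (by rw [hd, h0, zero_div])]
      · rw [if_neg h0, if_neg (by rw [hd]; exact div_ne_zero h0 hk')]
        congr 1
        rw [hd, hn, div_div_div_cancel_right₀]
        exact hk'

lemma det_rat (g : SL2Z) :
    (g.1 0 0 : ℚ) * (g.1 1 1 : ℚ) - (g.1 0 1 : ℚ) * (g.1 1 0 : ℚ) = 1 := by
  have h2 := g.2
  rw [Matrix.det_fin_two] at h2
  exact_mod_cast congrArg (fun z : ℤ => (z : ℚ)) h2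

lemma moebius_one (x : Option ℚ) : moebius 1 x = x := by
  cases x with
  | none => simp [moebius]
  | some t => simp [moebius]

lemma moebius_mul (g h : SL2Z) (x : Option ℚ) :
    moebius (g * h) x = moebius g (moebius h x) := by
  rw [moebius_eq_mob, moebius_eq_mob, moebius_eq_mob]
  obtain ⟨e1, e2, e3, e4⟩ := Matrix.two_mul_expl g.1 h.1
  have hcoe : (g * h).1 = g.1 * h.1 := rfl
  rw [hcoe, e1, e2, e3, e4]
  push_cast
  exact mob_mul _ _ _ _ _ _ _ _ (det_rat g) (det_rat h) x

lemma moebius_neg (g : SL2Z) (x : Option ℚ) : moebius (-g) x = moebius g x := by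
  have h1 : ∀ i j, ((-g).1 i j : ℚ) = -(g.1 i j : ℚ) := by
    intro i j
    rw [Matrix.SpecialLinearGroup.coe_neg]
    push_cast
    rfl
  cases x with
  | none =>
    simp only [moebius, h1]
    by_cases hc : (g.1 1 0 : ℚ) = 0
    · rw [if_pos hc, if_pos (by rw [hc, neg_zero])]
    · rw [if_neg hc, if_neg (by rw [neg_eq_zero]; exact hc), neg_div_neg_eq]
  | some t =>
    simp only [moebius, h1]
    have hC : (-(g.1 1 0 : ℚ)) * t + -(g.1 1 1 : ℚ) = -((g.1 1 0 : ℚ) * t + (g.1 1 1 : ℚ)) := by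
      ring
    have hN : (-(g.1 0 0 : ℚ)) * t + -(g.1 0 1 : ℚ) = -((g.1 0 0 : ℚ) * t + (g.1 0 1 : ℚ)) := by
      ring
    rw [hC, hN]
    by_cases hc : (g.1 1 0 : ℚ) * t + (g.1 1 1 : ℚ) = 0
    · rw [if_pos hc, if_pos (by rw [hc, neg_zero])]
    · rw [if_neg hc, if_neg (by rw [neg_eq_zero]; exact hc), neg_div_neg_eq]

lemma moebius_T_zpow (n : ℤ) : moebius (ModularGroup.T ^ n) none = none := by
  simp [moebius, ModularGroup.coe_T_zpow]

lemma T_zpow_inj {m n : ℤ} (hmn : ModularGroup.T ^ m = ModularGroup.T ^ n) : m = n := by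
  have := congrArg (fun g : SL2Z => g.1 0 1) hmn
  simpa [ModularGroup.coe_T_zpow] using this

lemma T_zpow_ne_neg (m n : ℤ) : ModularGroup.T ^ m ≠ -(ModularGroup.T ^ n) := by
  intro hmn
  have := congrArg (fun g : SL2Z => g.1 0 0) hmn
  simp [ModularGroup.coe_T_zpow, Matrix.SpecialLinearGroup.coe_neg] at this

lemma fix_infty {M : SL2Z} (hM : moebius M none = none) :
    ∃ b : ℤ, M = ModularGroup.T ^ b ∨ M = -(ModularGroup.T ^ b) := by
  have hc : M.1 1 0 = 0 := by
    simp only [moebius] at hM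
    by_contra hc0
    rw [if_neg (by exact_mod_cast hc0)] at hM
    exact absurd hM (Option.some_ne_none _)
  have hdet := M.2
  rw [Matrix.det_fin_two, hc, mul_zero, sub_zero] at hdet
  rcases Int.mul_eq_one_iff_eq_one_or_neg_one.mp hdet with ⟨h00, h11⟩ | ⟨h00, h11⟩
  · exact ⟨M.1 0 1, Or.inl (Subtype.ext (by
      rw [ModularGroup.coe_T_zpow]
      ext i j
      fin_cases i <;> fin_cases j <;> simp [h00, h11, hc]))⟩
  · exact ⟨-(M.1 0 1), Or.inr (Subtype.ext (by
      rw [Matrix.SpecialLinearGroup.coe_neg, ModularGroup.coe_T_zpow]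
      ext i j
      fin_cases i <;> fin_cases j <;> simp [h00, h11, hc]))⟩

lemma SL_neg_mul (a b : SL2Z) : (-a) * b = -(a * b) := by
  apply Subtype.ext
  show (-a).1 * b.1 = (-(a*b)).1
  rw [Matrix.SpecialLinearGroup.coe_neg, Matrix.SpecialLinearGroup.coe_neg,
    Matrix.neg_mul]
  rfl

lemma SL_mul_neg (a b : SL2Z) : a * (-b) = -(a * b) := by
  apply Subtype.ext
  show a.1 * (-b).1 = (-(a*b)).1
  rw [Matrix.SpecialLinearGroup.coe_neg, Matrix.SpecialLinearGroup.coe_neg,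
    Matrix.mul_neg]
  rfl

lemma SL_neg_neg (a : SL2Z) : -(-a) = a := by
  apply Subtype.ext
  rw [Matrix.SpecialLinearGroup.coe_neg, Matrix.SpecialLinearGroup.coe_neg, neg_neg]

lemma SL_neg_one_mul (a : SL2Z) : (-1) * a = -a := by
  rw [SL_neg_mul, one_mul]

lemma SL_inv_neg (a : SL2Z) : (-a)⁻¹ = -(a⁻¹) := by
  apply inv_eq_of_mul_eq_one_right
  rw [SL_neg_mul, SL_mul_neg, SL_neg_neg, mul_inv_cancel]

lemma mem_pm (Γ : Subgroup SL2Z) (x : SL2Z) : x ∈ pm Γ ↔ x ∈ Γ ∨ -x ∈ Γ := by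
  constructor
  · intro hx
    let K : Subgroup SL2Z :=
      { carrier := {y | y ∈ Γ ∨ -y ∈ Γ}
        one_mem' := Or.inl Γ.one_mem
        mul_mem' := by
          rintro a b (ha | ha) (hb | hb)
          · exact Or.inl (Γ.mul_mem ha hb)
          · refine Or.inr ?_
            rw [← SL_mul_neg]; exact Γ.mul_mem ha hb
          · refine Or.inr ?_
            rw [← SL_neg_mul]; exact Γ.mul_mem ha hb
          · refine Or.inl ?_
            have := Γ.mul_mem ha hb
            rw [SL_neg_mul, SL_mul_neg, SL_neg_neg] at this
            exact this
        inv_mem' := by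
          rintro a (ha | ha)
          · exact Or.inl (Γ.inv_mem ha)
          · refine Or.inr ?_
            rw [← SL_inv_neg]; exact Γ.inv_mem ha }
    have hle : pm Γ ≤ K := by
      apply sup_le
      · intro y hy; exact Or.inl hy
      · rw [Subgroup.zpowers_le]
        refine Or.inr ?_
        rw [SL_neg_neg]; exact Γ.one_mem
    exact hle hx
  · rintro (hx | hx)
    · exact Subgroup.mem_sup_left hx
    · have h1 : (-1 : SL2Z) ∈ pm Γ :=
        Subgroup.mem_sup_right (Subgroup.mem_zpowers _)
      have h2 : (-x : SL2Z) ∈ pm Γ := Subgroup.mem_sup_left hx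
      have := Subgroup.mul_mem _ h1 h2
      rw [SL_neg_one_mul, SL_neg_neg] at this
      exact this

lemma exists_N (x : Option ℚ) : ∃ N : SL2Z, moebius N none = x := by
  cases x with
  | none => exact ⟨1, moebius_one none⟩
  | some t =>
    have hcop : IsCoprime t.num (t.den : ℤ) := by
      rw [Int.isCoprime_iff_gcd_eq_one]
      exact t.reduced
    obtain ⟨u, v, huv⟩ := hcop
    refine ⟨⟨!![t.num, -v; (t.den : ℤ), u], ?_⟩, ?_⟩
    · rw [Matrix.det_fin_two_of]
      linarith [huv]
    · have hden : ((t.den : ℤ) : ℚ) ≠ 0 := by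
        exact_mod_cast (Nat.cast_ne_zero (R := ℚ)).mpr t.den_nz
      simp only [moebius]
      rw [if_neg (by simpa using hden)]
      congr 1
      show ((t.num : ℚ)) / ((t.den : ℤ) : ℚ) = t
      exact_mod_cast Rat.num_div_den t

lemma width_dvd {Γ : Subgroup SL2Z} {κ : Option ℚ} {W : ℕ} (hW : IsWidth Γ κ W)
    {N : SL2Z} (hN : moebius N none = κ) (b : ℤ) :
    N * ModularGroup.T ^ b * N⁻¹ ∈ pm Γ ↔ (W : ℤ) ∣ b := by
  have hmem := Set.ext_iff.mp (hW.2 N hN) (ModularGroup.T ^ b)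
  simp only [Set.mem_setOf_eq] at hmem
  rw [mem_pm]
  constructor
  · intro hmemG
    obtain ⟨m, hm | hm⟩ := hmem.mp ⟨hmemG, moebius_T_zpow b⟩
    · exact ⟨m, (T_zpow_inj hm).trans (mul_comm m W)⟩
    · exact absurd hm (T_zpow_ne_neg _ _)
  · rintro ⟨c, hc⟩
    exact (hmem.mpr ⟨c, Or.inl (by rw [hc, mul_comm])⟩).1


theorem stmt18 (Γ : Subgroup (Matrix.SpecialLinearGroup (Fin 2) ℤ)) (hfin : Γ.index ≠ 0)
    (h : ℕ) (κs : Fin h → Option ℚ)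
    (hdisj : ∀ i j, i ≠ j → ¬ cuspRel Γ (κs i) (κs j))
    (hcover : ∀ x : Option ℚ, ∃ i, cuspRel Γ (κs i) x)
    (Ws : Fin h → ℕ) (hWs : ∀ i, IsWidth Γ (κs i) (Ws i)) :
    (pm Γ).index = ∑ i, Ws i := by
  classical
  set G := pm Γ with hGdef
  have hnegG : ∀ x : SL2Z, x ∈ Γ → -x ∈ G := fun x hx =>
    (mem_pm Γ (-x)).mpr (Or.inr (by rw [SL_neg_neg]; exact hx))
  have hΓle : ∀ x : SL2Z, x ∈ Γ → x ∈ G := fun x hx => (mem_pm Γ x).mpr (Or.inl hx)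
  choose Ns hNs using fun i => exists_N (κs i)
  have key : ∀ (i : Fin h) (b : ℤ),
      Ns i * ModularGroup.T ^ b * (Ns i)⁻¹ ∈ G ↔ ((Ws i : ℤ)) ∣ b :=
    fun i b => width_dvd (hWs i) (hNs i) b
  have hback : ∀ A : SL2Z, moebius A⁻¹ (moebius A none) = none := by
    intro A
    rw [← moebius_mul, inv_mul_cancel, moebius_one]
  let F : (Σ i : Fin h, Fin (Ws i)) → Quotient (QuotientGroup.rightRel G) :=
    fun p => Quotient.mk _ (Ns p.1 * ModularGroup.T ^ ((p.2 : ℕ) : ℤ))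
  have hFbij : Function.Bijective F := by
    constructor
    · rintro ⟨i, m⟩ ⟨j, n⟩ hEq
      have hrel : (Ns j * ModularGroup.T ^ ((n : ℕ) : ℤ)) *
          (Ns i * ModularGroup.T ^ ((m : ℕ) : ℤ))⁻¹ ∈ G := by
        rw [← QuotientGroup.rightRel_apply]
        exact Quotient.exact hEq
      have hg2 : (Ns j * ModularGroup.T ^ ((n : ℕ) : ℤ)) *
          (Ns i * ModularGroup.T ^ ((m : ℕ) : ℤ))⁻¹
          = Ns j * ModularGroup.T ^ (((n : ℕ) : ℤ) - ((m : ℕ) : ℤ)) * (Ns i)⁻¹ := by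
        rw [_root_.zpow_sub]
        group
      rw [hg2] at hrel
      have hgmoeb : moebius (Ns j * ModularGroup.T ^ (((n : ℕ) : ℤ) - ((m : ℕ) : ℤ))
          * (Ns i)⁻¹) (κs i) = κs j := by
        rw [moebius_mul, ← hNs i, hback, moebius_mul, moebius_T_zpow, hNs j]
      have hcusp : cuspRel Γ (κs i) (κs j) := by
        rcases (mem_pm Γ _).mp hrel with hmem | hmem
        · exact ⟨_, hmem, hgmoeb⟩
        · exact ⟨_, hmem, by rw [moebius_neg]; exact hgmoeb⟩
      have hij : i = j := by
        by_contra hne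
        exact hdisj i j hne hcusp
      subst hij
      have hdvd := (key i _).mp hrel
      have hm := m.isLt
      have hn := n.isLt
      have hz : ((n : ℕ) : ℤ) - ((m : ℕ) : ℤ) = 0 := by
        refine Int.eq_zero_of_abs_lt_dvd hdvd ?_
        rw [abs_lt]
        constructor <;> push_cast <;> omega
      have : m = n := by
        apply Fin.ext
        omega
      rw [this]
    · intro q
      obtain ⟨N, rfl⟩ := Quotient.exists_rep q
      obtain ⟨i, γ, hγΓ, hγm⟩ := hcover (moebius N none)
      have hA : moebius (γ * Ns i) none = moebius N none := by
        rw [moebius_mul, hNs i, hγm]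
      have hMfix : moebius ((γ * Ns i)⁻¹ * N) none = none := by
        rw [moebius_mul, ← hA, ← moebius_mul, inv_mul_cancel, moebius_one]
      obtain ⟨b, hb⟩ := fix_infty hMfix
      have hWpos : 0 < Ws i := (hWs i).1
      have hmod := Int.emod_nonneg b (by exact_mod_cast hWpos.ne' : ((Ws i : ℤ)) ≠ 0)
      have hmodlt := Int.emod_lt_of_pos b (by exact_mod_cast hWpos : (0:ℤ) < (Ws i : ℤ))
      set r : ℕ := (b % (Ws i : ℤ)).toNat with hrdef
      have hrlt : r < Ws i := by omega
      have hrz : (r : ℤ) = b % (Ws i : ℤ) := by omega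
      refine ⟨⟨i, ⟨r, hrlt⟩⟩, ?_⟩
      refine Quotient.sound (QuotientGroup.rightRel_apply.mpr ?_)
      have hδ : ∃ δ : SL2Z, δ ∈ G ∧ N = δ * (Ns i * ModularGroup.T ^ b) := by
        have hNe : N = (γ * Ns i) * ((γ * Ns i)⁻¹ * N) := by group
        rcases hb with hb | hb
        · exact ⟨γ, hΓle γ hγΓ, by rw [hNe, hb]; group⟩
        · refine ⟨-γ, hnegG γ hγΓ, ?_⟩
          rw [hNe, hb, SL_mul_neg, SL_neg_mul, mul_assoc]
      obtain ⟨δ, hδG, hδN⟩ := hδ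
      have hexp : N * (Ns i * ModularGroup.T ^ ((r : ℕ) : ℤ))⁻¹
          = δ * (Ns i * ModularGroup.T ^ (b - (r : ℤ)) * (Ns i)⁻¹) := by
        rw [hδN, _root_.zpow_sub]
        group
      have hdvd : ((Ws i : ℤ)) ∣ (b - (r : ℤ)) := by
        have hdm := Int.mul_ediv_add_emod b (Ws i : ℤ)
        exact ⟨b / (Ws i : ℤ), by linarith⟩
      show N * (Ns i * ModularGroup.T ^ ((r : ℕ) : ℤ))⁻¹ ∈ G
      rw [hexp]
      exact Subgroup.mul_mem _ hδG ((key i _).mpr hdvd)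
  have hcard := Nat.card_eq_of_bijective F hFbij
  have h1 : Nat.card (Σ i : Fin h, Fin (Ws i)) = ∑ i, Ws i := by
    simp [Nat.card_eq_fintype_card, Fintype.card_sigma]
  have h2 : Nat.card (Quotient (QuotientGroup.rightRel G)) = G.index := by
    rw [Subgroup.index]
    exact Nat.card_congr (QuotientGroup.quotientRightRelEquivQuotientLeftRel G)
  rw [show (pm Γ).index = G.index from rfl, ← h2, ← hcard, h1]
end

section
/- For q ≥ 5, n a positive divisor of q, p = q/n, and κ = x/z ∈ ℚ ∪ {∞} with gcd(x,z) = 1 (with ∞ = 1/0), the cusp width of κ with respect to Γ_q^n equals q/gcd(p, z), where gcd(p,0) := p. In particular this fails for q = 4: W_{Γ_4^1}(1/2) = 1 ≠ 2. -/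
open Matrix CongruenceSubgroup

local notation "SL2Z" => Matrix.SpecialLinearGroup (Fin 2) ℤ

section Aux

lemma SL2_decomp (N : SL2Z) : ∃ a b c d : ℤ, N.1 = !![a,b;c,d] ∧ a*d - b*c = 1 := by
  refine ⟨N.1 0 0, N.1 0 1, N.1 1 0, N.1 1 1, ?_, ?_⟩
  · ext i j; fin_cases i <;> fin_cases j <;> rfl
  · have := N.2; rwa [Matrix.det_fin_two] at this

lemma eq_T_or_neg (M : SL2Z) (h : M.1 1 0 = 0) :
    ∃ k : ℤ, M = ModularGroup.T ^ k ∨ M = -ModularGroup.T ^ k := by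
  have hd := M.2
  rw [Matrix.det_fin_two, h] at hd
  simp only [mul_zero, sub_zero] at hd
  rcases Int.eq_one_or_neg_one_of_mul_eq_one' hd with ⟨h1, h2⟩ | ⟨h1, h2⟩
  · refine ⟨M.1 0 1, Or.inl ?_⟩
    apply Subtype.ext
    rw [ModularGroup.coe_T_zpow]
    ext i j; fin_cases i <;> fin_cases j <;> simp [h, h1, h2]
  · refine ⟨-(M.1 0 1), Or.inr ?_⟩
    apply Subtype.ext
    rw [Matrix.SpecialLinearGroup.coe_neg, ModularGroup.coe_T_zpow]
    ext i j; fin_cases i <;> fin_cases j <;> simp [h, h1, h2]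

lemma conj_T (N : SL2Z) (k a b c d : ℤ) (H : N.1 = !![a,b;c,d]) (hd : a*d - b*c = 1) :
    ((N * ModularGroup.T ^ k * N⁻¹ : SL2Z) : Matrix (Fin 2) (Fin 2) ℤ) =
      !![1 - k*(a*c), k*(a*a); -(k*(c*c)), 1 + k*(a*c)] := by
  rw [Matrix.SpecialLinearGroup.coe_mul, Matrix.SpecialLinearGroup.coe_mul,
    Matrix.SpecialLinearGroup.SL2_inv_expl, ModularGroup.coe_T_zpow]
  simp only [H]
  ext i j
  fin_cases i <;> fin_cases j <;>
    erw [Matrix.mul_apply] <;> simp [Matrix.mul_apply, Fin.sum_univ_two] <;>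
    first | linear_combination hd | ring

lemma key_dvd (n p : ℕ) (hp : 0 < p) (a c k : ℤ)
    (hac : IsCoprime a c) :
    (((n*p : ℕ) : ℤ) ∣ k*(a*c) ∧ ((n*p : ℕ) : ℤ) ∣ k*(c*c) ∧ (n : ℤ) ∣ k*(a*a)) ↔
      ((n*p / Nat.gcd p c.natAbs : ℕ) : ℤ) ∣ k := by
  set d : ℕ := Nat.gcd p c.natAbs with hd
  have hdp : d ∣ p := Nat.gcd_dvd_left _ _
  have hdpos : 0 < d := Nat.gcd_pos_of_pos_left _ hp
  have hdc : (d : ℤ) ∣ c := Int.dvd_natAbs.mp (Int.natCast_dvd_natCast.mpr (Nat.gcd_dvd_right p c.natAbs))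
  have hdq : d ∣ n * p := hdp.mul_left n
  have hR : (n * p / d) * d = n * p := Nat.div_mul_cancel hdq
  have hRd : ((n*p/d : ℕ) : ℤ) * d = (n : ℤ) * p := by exact_mod_cast congrArg (Nat.cast : ℕ → ℤ) hR
  constructor
  · rintro ⟨h1, h2, h3⟩
    obtain ⟨u, v, huv⟩ := hac.pow (n := 2) (m := 2)
    have hnk : (n : ℤ) ∣ k := by
      have h2' : (n : ℤ) ∣ k * (c*c) := dvd_trans (by exact_mod_cast Dvd.intro p rfl) h2
      have hk : k = u * (k * (a*a)) + v * (k * (c*c)) := by linear_combination k * huv.symm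
      rw [hk]
      exact dvd_add (h3.mul_left u) (h2'.mul_left v)
    have hqkc : ((n*p : ℕ) : ℤ) ∣ k * c := by
      obtain ⟨s, t, hst⟩ := hac
      have hk : k * c = t * (k * (c * c)) + s * (k * (a * c)) := by linear_combination (k*c) * hst.symm
      rw [hk]
      exact dvd_add (h2.mul_left t) (h1.mul_left s)
    have hqkp : ((n*p : ℕ) : ℤ) ∣ k * (p : ℤ) := by
      obtain ⟨m, hm⟩ := hnk
      exact ⟨m, by push_cast; rw [hm]; ring⟩
    have hgcd : (d : ℤ) = (p : ℤ) * Int.gcdA p c + c * Int.gcdB p c := by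
      have h := Int.gcd_eq_gcd_ab (p : ℤ) c
      rwa [show Int.gcd (p : ℤ) c = d by simp [Int.gcd, hd]] at h
    have hqkd : ((n*p : ℕ) : ℤ) ∣ k * d := by
      rw [hgcd, mul_add, show k * ((p:ℤ) * Int.gcdA p c) = (k * p) * Int.gcdA p c by ring,
        show k * (c * Int.gcdB p c) = (k * c) * Int.gcdB p c by ring]
      exact dvd_add (hqkp.mul_right _) (hqkc.mul_right _)
    have h5 : ((n*p/d : ℕ) : ℤ) * d ∣ k * d := by rwa [hRd, show (n:ℤ)*p = ((n*p:ℕ):ℤ) by push_cast; ring]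
    exact (mul_dvd_mul_iff_right (by exact_mod_cast hdpos.ne')).mp h5
  · rintro ⟨m, hm⟩
    obtain ⟨c2, hc2⟩ := hdc
    refine ⟨⟨m * c2 * a, ?_⟩, ⟨m * c2 * c, ?_⟩, ?_⟩
    · push_cast
      linear_combination (a*c)*hm + (((n*p/d : ℕ) : ℤ)*m*a)*hc2 + (m*c2*a)*hRd
    · push_cast
      linear_combination (c*c)*hm + (((n*p/d : ℕ) : ℤ)*m*c)*hc2 + (m*c2*c)*hRd
    · have hnR : (n : ℤ) ∣ ((n*p/d : ℕ) : ℤ) := by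
        rw [show n * p / d = n * (p / d) from Nat.mul_div_assoc n hdp]
        push_cast
        exact Dvd.intro _ rfl
      exact (hnR.trans ⟨m, hm⟩).mul_right _

lemma moebius_none (g : SL2Z) : moebius g none = if ((g.1 1 0 : ℤ) : ℚ) = 0 then none
    else some (((g.1 0 0 : ℤ) : ℚ) / ((g.1 1 0 : ℤ) : ℚ)) := rfl

lemma moebius_none_eq_none_iff (M : SL2Z) : moebius M none = none ↔ M.1 1 0 = 0 := by
  rw [moebius_none]
  split_ifs with h
  · simpa using h
  · simp only [reduceCtorEq, false_iff]
    intro hc; exact h (by exact_mod_cast congrArg (Int.cast : ℤ → ℚ) hc)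

lemma coprime_of_det (a b c d : ℤ) (hd : a*d - b*c = 1) : IsCoprime a c :=
  ⟨d, -b, by linear_combination hd⟩

lemma natAbs_c_eq (N : SL2Z) (x z : ℤ) (hxz : IsCoprime x z)
    (h : moebius N none = (if z = 0 then none else some ((x : ℚ) / (z : ℚ)))) :
    (N.1 1 0).natAbs = z.natAbs := by
  by_cases hz : z = 0
  · rw [if_pos hz] at h
    rw [hz, (moebius_none_eq_none_iff N).mp h]
  · rw [if_neg hz, moebius_none] at h
    split_ifs at h with hc0
    have hc0' : N.1 1 0 ≠ 0 := fun hh => hc0 (by rw [hh]; norm_num)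
    have hcross : N.1 0 0 * z = x * N.1 1 0 := by
      have := Option.some_injective _ h
      rw [div_eq_div_iff (by exact_mod_cast hc0') (by exact_mod_cast hz)] at this
      exact_mod_cast this
    obtain ⟨a', b', c', d', H, hd⟩ := SL2_decomp N
    have ha : N.1 0 0 = a' := by rw [H]; rfl
    have hc : N.1 1 0 = c' := by rw [H]; rfl
    rw [ha, hc] at hcross
    rw [hc]
    have hcop : IsCoprime c' a' := (coprime_of_det a' b' c' d' hd).symm
    have h1 : z ∣ c' := by
      refine hxz.symm.dvd_of_dvd_mul_left ?_
      exact ⟨a', by linear_combination -hcross⟩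
    have h2 : c' ∣ z := by
      refine hcop.dvd_of_dvd_mul_right ?_
      exact ⟨x, by linear_combination hcross⟩
    exact Nat.dvd_antisymm (Int.natAbs_dvd_natAbs.mpr h2) (Int.natAbs_dvd_natAbs.mpr h1)

lemma mem_GammaQN (q n : ℕ) (A : SL2Z) : A ∈ GammaQN q n ↔
    ((A.1 0 0 : ZMod q) = 1 ∧ (A.1 1 1 : ZMod q) = 1 ∧ (A.1 1 0 : ZMod q) = 0 ∧
      ((A.1 0 1 : ℤ) : ZMod n) = 0) := by
  rw [GammaQN, Subgroup.mem_inf, Gamma1_mem]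
  tauto


lemma castone (q : ℕ) (s : ℤ) : ((s : ℤ) : ZMod q) = 1 ↔ (q:ℤ) ∣ s - 1 := by
  rw [← ZMod.intCast_zmod_eq_zero_iff_dvd]
  push_cast
  rw [sub_eq_zero]

lemma castzero (q : ℕ) (s : ℤ) : ((s : ℤ) : ZMod q) = 0 ↔ (q:ℤ) ∣ s :=
  ZMod.intCast_zmod_eq_zero_iff_dvd s q

end Aux

theorem stmt19 :
    (∀ q n : ℕ, 5 ≤ q → 0 < n → n ∣ q → ∀ x z : ℤ, IsCoprime x z →
      IsWidth (GammaQN q n) (if z = 0 then none else some ((x : ℚ) / (z : ℚ)))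
        (q / Nat.gcd (q / n) z.natAbs)) ∧
    IsWidth (GammaQN 4 1) (some ((1 : ℚ) / 2)) 1 ∧
    ¬ IsWidth (GammaQN 4 1) (some ((1 : ℚ) / 2)) 2 := by
  refine ⟨?_, ?_, ?_⟩
  · intro q n h5 hn hdvd x z hxz
    obtain ⟨p, hq⟩ := hdvd
    have hp : 0 < p := by
      rcases Nat.eq_zero_or_pos p with h | h
      · subst h; omega
      · exact h
    have hpn : q / n = p := by rw [hq]; exact Nat.mul_div_cancel_left p hn
    have hgpos : 0 < Nat.gcd p z.natAbs := Nat.gcd_pos_of_pos_left _ hp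
    have hgq : Nat.gcd p z.natAbs ∣ q := (Nat.gcd_dvd_left p z.natAbs).trans ⟨n, by rw [hq, mul_comm]⟩
    constructor
    · rw [hpn]
      exact Nat.div_pos (Nat.le_of_dvd (by omega) hgq) hgpos
    intro N hN
    obtain ⟨a, b, c, d, H, hdet⟩ := SL2_decomp N
    have hac : IsCoprime a c := coprime_of_det a b c d hdet
    have hcz : c.natAbs = z.natAbs := by
      have := natAbs_c_eq N x z hxz hN
      rwa [show N.1 1 0 = c by rw [H]; rfl] at this
    set R : ℕ := q / Nat.gcd (q / n) z.natAbs with hRdef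
    have hReq : R = n * p / Nat.gcd p c.natAbs := by rw [hRdef, hpn, hcz, hq]
    -- dvd characterization of membership of the conjugate
    have t1 : ∀ t : ℤ, ((1 - t : ℤ) : ZMod q) = 1 ↔ (q:ℤ) ∣ t := by
      intro t
      rw [← ZMod.intCast_zmod_eq_zero_iff_dvd]
      push_cast
      rw [sub_eq_self]
    have t2 : ∀ t : ℤ, ((1 + t : ℤ) : ZMod q) = 1 ↔ (q:ℤ) ∣ t := by
      intro t
      rw [← ZMod.intCast_zmod_eq_zero_iff_dvd]
      push_cast
      rw [add_eq_left]
    have t3 : ∀ t : ℤ, ((-t : ℤ) : ZMod q) = 0 ↔ (q:ℤ) ∣ t := by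
      intro t
      rw [← ZMod.intCast_zmod_eq_zero_iff_dvd]
      push_cast
      rw [neg_eq_zero]
    have hmemiff : ∀ k : ℤ, (N * ModularGroup.T ^ k * N⁻¹ ∈ GammaQN q n) ↔ ((R : ℤ) ∣ k) := by
      intro k
      have hC := conj_T N k a b c d H hdet
      have e00 : (N * ModularGroup.T ^ k * N⁻¹).1 0 0 = 1 - k*(a*c) := by rw [hC]; rfl
      have e01 : (N * ModularGroup.T ^ k * N⁻¹).1 0 1 = k*(a*a) := by rw [hC]; rfl
      have e10 : (N * ModularGroup.T ^ k * N⁻¹).1 1 0 = -(k*(c*c)) := by rw [hC]; rfl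
      have e11 : (N * ModularGroup.T ^ k * N⁻¹).1 1 1 = 1 + k*(a*c) := by rw [hC]; rfl
      rw [mem_GammaQN, e00, e01, e10, e11, t1, t2, t3, ZMod.intCast_zmod_eq_zero_iff_dvd]
      rw [hReq]
      rw [← key_dvd n p hp a c k hac]
      constructor
      · rintro ⟨u1, u2, u3, u4⟩
        rw [hq] at u1 u3
        exact ⟨u1, u3, u4⟩
      · rintro ⟨u1, u2, u3⟩
        rw [← hq] at u1 u2
        exact ⟨u1, u1, u2, u3⟩
    have hneg : ∀ k : ℤ, ¬ (-(N * ModularGroup.T ^ k * N⁻¹) ∈ GammaQN q n) := by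
      intro k hmem
      rw [mem_GammaQN] at hmem
      have hC := conj_T N k a b c d H hdet
      have e00 : (-(N * ModularGroup.T ^ k * N⁻¹)).1 0 0 = -(1 - k*(a*c)) := by
        rw [Matrix.SpecialLinearGroup.coe_neg, hC]; rfl
      have e11 : (-(N * ModularGroup.T ^ k * N⁻¹)).1 1 1 = -(1 + k*(a*c)) := by
        rw [Matrix.SpecialLinearGroup.coe_neg, hC]; rfl
      rw [e00, e11] at hmem
      obtain ⟨h1, h2, -, -⟩ := hmem
      have h4 : ((4:ℤ) : ZMod q) = 0 := by
        push_cast at h1 h2 ⊢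
        linear_combination -h1 - h2
      have : (q:ℤ) ∣ 4 := (ZMod.intCast_zmod_eq_zero_iff_dvd 4 q).mp h4
      have : (q:ℤ) ≤ 4 := Int.le_of_dvd (by norm_num) this
      omega
    ext M
    simp only [Set.mem_setOf_eq]
    constructor
    · rintro ⟨hmem, hfix⟩
      obtain ⟨k, rfl | rfl⟩ := eq_T_or_neg M ((moebius_none_eq_none_iff M).mp hfix)
      · rcases hmem with hm1 | hm1
        · obtain ⟨m, hm⟩ := (hmemiff k).mp hm1
          exact ⟨m, Or.inl (by rw [hm, mul_comm])⟩
        · exact absurd hm1 (hneg k)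
      · rw [mul_neg, neg_mul, neg_neg] at hmem
        rcases hmem with hm1 | hm1
        · exact absurd hm1 (hneg k)
        · obtain ⟨m, hm⟩ := (hmemiff k).mp hm1
          exact ⟨m, Or.inr (by rw [hm, mul_comm])⟩
    · rintro ⟨m, rfl | rfl⟩
      · refine ⟨Or.inl ((hmemiff _).mpr ⟨m, mul_comm _ _⟩), ?_⟩
        rw [moebius_none_eq_none_iff, ModularGroup.coe_T_zpow]
        rfl
      · refine ⟨Or.inr ?_, ?_⟩
        · rw [mul_neg, neg_mul, neg_neg]
          exact (hmemiff _).mpr ⟨m, mul_comm _ _⟩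
        · rw [moebius_none_eq_none_iff, Matrix.SpecialLinearGroup.coe_neg, ModularGroup.coe_T_zpow]
          rfl
  · refine ⟨one_pos, ?_⟩
    intro N hN
    have hN' : moebius N none = (if (2:ℤ) = 0 then none else some (((1:ℤ) : ℚ) / ((2:ℤ) : ℚ))) := by
      rw [if_neg (by norm_num)]
      rw [hN]
      norm_num
    obtain ⟨a, b, c, d, H, hdet⟩ := SL2_decomp N
    have hcz : c.natAbs = 2 := by
      have := natAbs_c_eq N 1 2 isCoprime_one_left hN'
      rwa [show N.1 1 0 = c by rw [H]; rfl, show ((2:ℤ)).natAbs = 2 from rfl] at this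
    have hc24 : c = 2 ∨ c = -2 := by
      rcases Int.natAbs_eq c with h | h <;> rw [hcz] at h <;> omega
    have hcc : c * c = 4 := by rcases hc24 with rfl | rfl <;> norm_num
    have hall : ∀ k : ℤ, (N * ModularGroup.T ^ k * N⁻¹ ∈ GammaQN 4 1) ∨
        (-(N * ModularGroup.T ^ k * N⁻¹) ∈ GammaQN 4 1) := by
      intro k
      have hC := conj_T N k a b c d H hdet
      have e00 : (N * ModularGroup.T ^ k * N⁻¹).1 0 0 = 1 - k*(a*c) := by rw [hC]; rfl
      have e01 : (N * ModularGroup.T ^ k * N⁻¹).1 0 1 = k*(a*a) := by rw [hC]; rfl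
      have e10 : (N * ModularGroup.T ^ k * N⁻¹).1 1 0 = -(k*(c*c)) := by rw [hC]; rfl
      have e11 : (N * ModularGroup.T ^ k * N⁻¹).1 1 1 = 1 + k*(a*c) := by rw [hC]; rfl
      have f00 : (-(N * ModularGroup.T ^ k * N⁻¹)).1 0 0 = -(1 - k*(a*c)) := by
        rw [Matrix.SpecialLinearGroup.coe_neg, hC]; rfl
      have f01 : (-(N * ModularGroup.T ^ k * N⁻¹)).1 0 1 = -(k*(a*a)) := by
        rw [Matrix.SpecialLinearGroup.coe_neg, hC]; rfl
      have f10 : (-(N * ModularGroup.T ^ k * N⁻¹)).1 1 0 = k*(c*c) := by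
        rw [Matrix.SpecialLinearGroup.coe_neg, hC]; show -(-(k*(c*c))) = _; ring
      have f11 : (-(N * ModularGroup.T ^ k * N⁻¹)).1 1 1 = -(1 + k*(a*c)) := by
        rw [Matrix.SpecialLinearGroup.coe_neg, hC]; rfl
      have hone : ∀ t : ℤ, ((t : ℤ) : ZMod 1) = 0 := fun t => Subsingleton.elim _ _
      obtain ⟨i, hi⟩ : ∃ i, k*(a*c) = 2*i := by
        rcases hc24 with rfl | rfl
        · exact ⟨k*a, by ring⟩
        · exact ⟨-(k*a), by ring⟩
      rcases Int.even_or_odd i with ⟨w, hw⟩ | ⟨w, hw⟩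
      · left
        rw [mem_GammaQN, e00, e01, e10, e11, castone, castone, castzero, hone]
        refine ⟨?_, ?_, ?_, rfl⟩ <;> rw [hcc] at * <;> omega
      · right
        rw [mem_GammaQN, f00, f01, f10, f11, castone, castone, castzero, hone]
        refine ⟨?_, ?_, ?_, rfl⟩ <;> rw [hcc] at * <;> omega
    ext M
    simp only [Set.mem_setOf_eq]
    constructor
    · rintro ⟨hmem, hfix⟩
      obtain ⟨k, rfl | rfl⟩ := eq_T_or_neg M ((moebius_none_eq_none_iff M).mp hfix)
      · exact ⟨k, Or.inl (by norm_num)⟩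
      · exact ⟨k, Or.inr (by norm_num)⟩
    · rintro ⟨m, rfl | rfl⟩
      · refine ⟨hall _, ?_⟩
        rw [moebius_none_eq_none_iff, ModularGroup.coe_T_zpow]
        rfl
      · refine ⟨?_, ?_⟩
        · rw [mul_neg, neg_mul, neg_neg]
          exact (hall _).symm.imp id id |>.symm.elim Or.inr Or.inl
        · rw [moebius_none_eq_none_iff, Matrix.SpecialLinearGroup.coe_neg, ModularGroup.coe_T_zpow]
          rfl
  · rintro ⟨-, hw⟩
    set N : SL2Z := ⟨!![1,0;2,1], by simp [Matrix.det_fin_two_of]⟩ with hNdef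
    have hN : moebius N none = some ((1:ℚ)/2) := by
      rw [moebius_none]
      norm_num [hNdef]
    have h := hw N hN
    have hT : ModularGroup.T ∈ {M : SL2Z |
        (N * M * N⁻¹ ∈ GammaQN 4 1 ∨ -(N * M * N⁻¹) ∈ GammaQN 4 1) ∧ moebius M none = none} := by
      constructor
      · right
        have hC := conj_T N 1 1 0 2 1 (by ext i j; fin_cases i <;> fin_cases j <;> rfl) (by norm_num)
        rw [zpow_one] at hC
        have f00 : (-(N * ModularGroup.T * N⁻¹)).1 0 0 = 1 := by
          rw [Matrix.SpecialLinearGroup.coe_neg, hC]; norm_num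
        have f01 : (-(N * ModularGroup.T * N⁻¹)).1 0 1 = -1 := by
          rw [Matrix.SpecialLinearGroup.coe_neg, hC]; norm_num
        have f10 : (-(N * ModularGroup.T * N⁻¹)).1 1 0 = 4 := by
          rw [Matrix.SpecialLinearGroup.coe_neg, hC]; norm_num
        have f11 : (-(N * ModularGroup.T * N⁻¹)).1 1 1 = -3 := by
          rw [Matrix.SpecialLinearGroup.coe_neg, hC]; norm_num
        rw [mem_GammaQN, f00, f01, f10, f11]
        refine ⟨by rw [castone]; norm_num, by rw [castone]; omega, by rw [castzero]; norm_num,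
          Subsingleton.elim _ _⟩
      · rw [moebius_none_eq_none_iff, ModularGroup.coe_T]
        rfl
    rw [h] at hT
    obtain ⟨m, hm | hm⟩ := hT
    · have := congrArg (fun g : SL2Z => g.1 0 1) hm
      simp only [ModularGroup.coe_T_zpow, ModularGroup.coe_T] at this
      simp at this
      omega
    · have := congrArg (fun g : SL2Z => g.1 0 0) hm
      simp only [Matrix.SpecialLinearGroup.coe_neg, ModularGroup.coe_T_zpow,
        ModularGroup.coe_T] at this
      simp at this
end
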